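/- Let ψ : ℝ → (0,∞) be continuous, strictly positive and increasing, and let Ψ be a primitive of 1/ψ (so Ψ' = 1/ψ). Let (v_n) be a sequence of nonnegative reals and (u_n) a real sequence such that u_{n+1} − u_n ≤ −v_n ψ(u_n) for all n ∈ ℕ. Then for all n ∈ ℕ: Ψ(u_n) ≤ Ψ(u_0) − Σ_{k=0}^{n−1} v_k; equivalently, since Ψ is strictly increasing, u_n ≤ Ψ^{-1}(Ψ(u_0) − Σ_{k=0}^{n−1} v_k) whenever the right-hand side argument lies in the range of Ψ. -/

import Mathlib

/-- **Nonlinear discrete Gronwall lemma.** Let `ψ : ℝ → (0,∞)` be continuous, strictly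
positive and increasing, `Ψ` a primitive of `1/ψ`, `(v_n)` nonnegative, and suppose
`u_{n+1} − u_n ≤ −v_n ψ(u_n)` for all `n`. Then `Ψ(u_n) ≤ Ψ(u_0) − Σ_{k<n} v_k`
for all `n` (equivalently `u_n ≤ Ψ⁻¹(Ψ(u_0) − Σ_{k<n} v_k)` since `Ψ` is strictly
increasing). -/
theorem nonlinear_discrete_gronwall
    (ψ Ψ : ℝ → ℝ)
    (hψc : Continuous ψ) (hψpos : ∀ x, 0 < ψ x) (hψmono : Monotone ψ)
    (hΨ : ∀ x, HasDerivAt Ψ (1 / ψ x) x)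
    (u v : ℕ → ℝ) (hv : ∀ n, 0 ≤ v n)
    (hrec : ∀ n, u (n + 1) - u n ≤ -(v n) * ψ (u n)) :
    ∀ n, Ψ (u n) ≤ Ψ (u 0) - ∑ k ∈ Finset.range n, v k := by
  have key : ∀ n, Ψ (u (n + 1)) ≤ Ψ (u n) - v n := by
    intro n
    have hpos := hψpos (u n)
    have hstep : u (n + 1) ≤ u n - v n * ψ (u n) := by
      have := hrec n; linarith
    have hle : u (n + 1) ≤ u n := by
      nlinarith [mul_nonneg (hv n) (hψpos (u n)).le]
    -- g x = Ψ x - x / ψ (u n) is monotone on Iic (u n)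
    set c := ψ (u n) with hc
    have hmono : MonotoneOn (fun x => Ψ x - x / c) (Set.Iic (u n)) := by
      have hgdiff : Differentiable ℝ (fun x => Ψ x - x / c) := fun x =>
        ((hΨ x).sub ((hasDerivAt_id x).div_const c)).differentiableAt
      apply monotoneOn_of_deriv_nonneg (convex_Iic _) hgdiff.continuous.continuousOn
        (fun x _ => (hgdiff x).differentiableWithinAt)
      intro x hx
      have hx' : x < u n := by simpa using hx
      have hd : deriv (fun x => Ψ x - x / c) x = 1 / ψ x - 1 / c := by
        have := (((hΨ x).sub ((hasDerivAt_id x).div_const c)) :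
          HasDerivAt (fun x => Ψ x - x / c) (1 / ψ x - 1 / c) x).deriv
        exact this
      rw [hd]
      have : ψ x ≤ c := hψmono hx'.le
      have h1 : (0:ℝ) < ψ x := hψpos x
      have h2 : (0:ℝ) < c := hpos
      rw [sub_nonneg, div_le_div_iff₀ h2 h1]
      nlinarith
    have hmem1 : u (n + 1) ∈ Set.Iic (u n) := hle
    have hmem2 : u n ∈ Set.Iic (u n) := Set.mem_Iic.2 le_rfl
    have hmain := hmono hmem1 hmem2 hle
    simp only at hmain
    have h3 : v n ≤ (u n - u (n + 1)) / c := by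
      rw [le_div_iff₀ hpos]; nlinarith
    have h4 : u n / c - u (n + 1) / c = (u n - u (n + 1)) / c := (sub_div _ _ _).symm
    linarith
  intro n
  induction n with
  | zero => simp
  | succ n ih =>
    rw [Finset.sum_range_succ]
    have := key n
    linarith
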